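/- A vector v ∈ ℝ^{nT} is a fixed point of the Kronecker projector M_cs ⊗ M_te if and only if it is cross-temporally coherent: (M_cs ⊗ M_te)·v = v if and only if (Uᵀ ⊗ I_T)·v = 0 and (I_n ⊗ Zᵀ)·v = 0. -/

import Mathlib

open Matrix Kronecker

/-- a vector v is a fixed point of the Kronecker projector
M_cs ⊗ M_te iff it is cross-temporally coherent, i.e. (Uᵀ ⊗ I_T)v = 0 and
(I_n ⊗ Zᵀ)v = 0. -/
theorem stmt_5 {n na T k : ℕ}
    (W : Matrix (Fin n) (Fin n) ℝ) (hW : W.PosDef)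
    (U : Matrix (Fin n) (Fin na) ℝ) (hU : IsUnit (Uᵀ * W * U))
    (Ω : Matrix (Fin T) (Fin T) ℝ) (hΩ : Ω.PosDef)
    (Z : Matrix (Fin T) (Fin k) ℝ) (hZ : IsUnit (Zᵀ * Ω * Z))
    (Mcs : Matrix (Fin n) (Fin n) ℝ) (hMcs : Mcs = 1 - W * U * (Uᵀ * W * U)⁻¹ * Uᵀ)
    (Mte : Matrix (Fin T) (Fin T) ℝ) (hMte : Mte = 1 - Ω * Z * (Zᵀ * Ω * Z)⁻¹ * Zᵀ)
    (v : Fin n × Fin T → ℝ) :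
    (Mcs ⊗ₖ Mte).mulVec v = v ↔
      ((Uᵀ ⊗ₖ (1 : Matrix (Fin T) (Fin T) ℝ)).mulVec v = 0 ∧
        (((1 : Matrix (Fin n) (Fin n) ℝ)) ⊗ₖ Zᵀ).mulVec v = 0) := by
  have hUdet : IsUnit (Uᵀ * W * U).det := (Matrix.isUnit_iff_isUnit_det _).mp hU
  have hZdet : IsUnit (Zᵀ * Ω * Z).det := (Matrix.isUnit_iff_isUnit_det _).mp hZ
  have hUM : Uᵀ * Mcs = 0 := by
    rw [hMcs, Matrix.mul_sub, Matrix.mul_one]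
    have : Uᵀ * (W * U * (Uᵀ * W * U)⁻¹ * Uᵀ) =
        (Uᵀ * W * U) * (Uᵀ * W * U)⁻¹ * Uᵀ := by simp only [Matrix.mul_assoc]
    rw [this, Matrix.mul_nonsing_inv _ hUdet, Matrix.one_mul, sub_self]
  have hZM : Zᵀ * Mte = 0 := by
    rw [hMte, Matrix.mul_sub, Matrix.mul_one]
    have : Zᵀ * (Ω * Z * (Zᵀ * Ω * Z)⁻¹ * Zᵀ) =
        (Zᵀ * Ω * Z) * (Zᵀ * Ω * Z)⁻¹ * Zᵀ := by simp only [Matrix.mul_assoc]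
    rw [this, Matrix.mul_nonsing_inv _ hZdet, Matrix.one_mul, sub_self]
  constructor
  · intro h
    constructor
    · calc (Uᵀ ⊗ₖ (1 : Matrix (Fin T) (Fin T) ℝ)).mulVec v
          = (Uᵀ ⊗ₖ (1 : Matrix (Fin T) (Fin T) ℝ)).mulVec ((Mcs ⊗ₖ Mte).mulVec v) := by rw [h]
        _ = ((Uᵀ * Mcs) ⊗ₖ ((1 : Matrix (Fin T) (Fin T) ℝ) * Mte)).mulVec v := by
            rw [Matrix.mulVec_mulVec, ← Matrix.mul_kronecker_mul]
        _ = 0 := by rw [hUM, Matrix.zero_kronecker, Matrix.zero_mulVec]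
    · calc ((1 : Matrix (Fin n) (Fin n) ℝ) ⊗ₖ Zᵀ).mulVec v
          = ((1 : Matrix (Fin n) (Fin n) ℝ) ⊗ₖ Zᵀ).mulVec ((Mcs ⊗ₖ Mte).mulVec v) := by rw [h]
        _ = (((1 : Matrix (Fin n) (Fin n) ℝ) * Mcs) ⊗ₖ (Zᵀ * Mte)).mulVec v := by
            rw [Matrix.mulVec_mulVec, ← Matrix.mul_kronecker_mul]
        _ = 0 := by rw [hZM, Matrix.kronecker_zero, Matrix.zero_mulVec]
  · rintro ⟨h1, h2⟩
    set A : Matrix (Fin n) (Fin na) ℝ := W * U * (Uᵀ * W * U)⁻¹ with hA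
    set B : Matrix (Fin T) (Fin k) ℝ := Ω * Z * (Zᵀ * Ω * Z)⁻¹ with hB
    have e1 : ((A * Uᵀ) ⊗ₖ (1 : Matrix (Fin T) (Fin T) ℝ)).mulVec v = 0 := by
      have : (A * Uᵀ) ⊗ₖ ((1 : Matrix (Fin T) (Fin T) ℝ) * 1) =
          (A ⊗ₖ (1 : Matrix (Fin T) (Fin T) ℝ)) * (Uᵀ ⊗ₖ (1 : Matrix (Fin T) (Fin T) ℝ)) := Matrix.mul_kronecker_mul _ _ _ _
      rw [Matrix.one_mul] at this
      rw [this, ← Matrix.mulVec_mulVec, h1, Matrix.mulVec_zero]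
    have e2 : (((1 : Matrix (Fin n) (Fin n) ℝ)) ⊗ₖ (B * Zᵀ)).mulVec v = 0 := by
      have : ((1 : Matrix (Fin n) (Fin n) ℝ) * 1) ⊗ₖ (B * Zᵀ) =
          ((1 : Matrix (Fin n) (Fin n) ℝ) ⊗ₖ B) * ((1 : Matrix (Fin n) (Fin n) ℝ) ⊗ₖ Zᵀ) := Matrix.mul_kronecker_mul _ _ _ _
      rw [Matrix.one_mul] at this
      rw [this, ← Matrix.mulVec_mulVec, h2, Matrix.mulVec_zero]
    have e3 : ((A * Uᵀ) ⊗ₖ (B * Zᵀ)).mulVec v = 0 := by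
      have : ((A * Uᵀ) * 1) ⊗ₖ (B * Zᵀ) =
          ((A * Uᵀ) ⊗ₖ B) * ((1 : Matrix (Fin n) (Fin n) ℝ) ⊗ₖ Zᵀ) :=
        Matrix.mul_kronecker_mul _ _ _ _
      rw [Matrix.mul_one] at this
      rw [this, ← Matrix.mulVec_mulVec, h2, Matrix.mulVec_zero]
    have hexp : Mcs ⊗ₖ Mte =
        (1 : Matrix (Fin n × Fin T) (Fin n × Fin T) ℝ)
          - (A * Uᵀ) ⊗ₖ (1 : Matrix (Fin T) (Fin T) ℝ)
          - ((1 : Matrix (Fin n) (Fin n) ℝ)) ⊗ₖ (B * Zᵀ)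
          + (A * Uᵀ) ⊗ₖ (B * Zᵀ) := by
      have subk : ∀ {a b c d : ℕ} (A₁ A₂ : Matrix (Fin a) (Fin b) ℝ)
          (C : Matrix (Fin c) (Fin d) ℝ), (A₁ - A₂) ⊗ₖ C = A₁ ⊗ₖ C - A₂ ⊗ₖ C := by
        intros a b c d A₁ A₂ C
        ext ⟨i1, i2⟩ ⟨j1, j2⟩
        simp [Matrix.kroneckerMap_apply, sub_mul]
      have ksub : ∀ {a b c d : ℕ} (C : Matrix (Fin a) (Fin b) ℝ)
          (B₁ B₂ : Matrix (Fin c) (Fin d) ℝ), C ⊗ₖ (B₁ - B₂) = C ⊗ₖ B₁ - C ⊗ₖ B₂ := by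
        intros a b c d C B₁ B₂
        ext ⟨i1, i2⟩ ⟨j1, j2⟩
        simp [Matrix.kroneckerMap_apply, mul_sub]
      rw [hMcs, hMte, hA, hB, subk, ksub, ksub,
        Matrix.one_kronecker_one]
      abel
    rw [hexp, Matrix.add_mulVec, Matrix.sub_mulVec, Matrix.sub_mulVec, Matrix.one_mulVec,
      e1, e2, e3, sub_zero, sub_zero, add_zero]
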